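/- arXiv:2309.02597 — 2 statements merged into one kernel-verified Lean document; each statement's English description precedes it below -/
import Mathlib

section
/- Let $(A_0,A_1)$ be a compatible pair of normed spaces, $B$ a normed space, $T$ linear with $T: A_0 \to B$ of norm $\|T\|_0 > 0$ and $T: A_1 \to B$ of norm $\|T\|_1$. Let $p > 0$ and let $\rho$ be a non-negative measurable function supported in $(0, \|T\|_1/\|T\|_0)$ with $\int_0^\infty \rho(t)\,dt = 1$. Then for every $f \in A_0 + A_1$, $\|Tf\|_B \le \|T\|_1 \left(\int_0^{\|T\|_1/\|T\|_0} \left(\frac{K(t,f;A_0,A_1)}{t}\right)^p \rho(t)\,dt\right)^{1/p}$. -/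
open MeasureTheory

/-- The Peetre `K`-functional of a compatible pair of normed spaces `(A₀, A₁)`,
modelled by two normed spaces `E0`, `E1` mapped additively into a common ambient
group `X`. -/
noncomputable def Kpair {X E0 E1 : Type*} [AddCommGroup X]
    [NormedAddCommGroup E0] [NormedAddCommGroup E1]
    (i0 : E0 →+ X) (i1 : E1 →+ X) (t : ℝ) (x : X) : ℝ :=
  sInf {r : ℝ | ∃ (a0 : E0) (a1 : E1), i0 a0 + i1 a1 = x ∧ r = ‖a0‖ + t * ‖a1‖}

/-- Theorem 1.1 of the paper: the self-improving inequality via `K`-functionals. -/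
theorem stmt3 {X E0 E1 B : Type*} [AddCommGroup X]
    [NormedAddCommGroup E0] [NormedAddCommGroup E1] [NormedAddCommGroup B]
    (i0 : E0 →+ X) (i1 : E1 →+ X) (T : X →+ B) (C0 C1 : ℝ)
    (hC0 : 0 < C0) (hC1 : 0 ≤ C1)
    (hT0 : ∀ a : E0, ‖T (i0 a)‖ ≤ C0 * ‖a‖)
    (hT1 : ∀ a : E1, ‖T (i1 a)‖ ≤ C1 * ‖a‖)
    (p : ℝ) (hp : 0 < p)
    (ρ : ℝ → ℝ) (hρmeas : Measurable ρ) (hρnn : ∀ t, 0 ≤ ρ t)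
    (hρsupp : Function.support ρ ⊆ Set.Ioo 0 (C1 / C0))
    (hρint : ∫ t in Set.Ioi (0 : ℝ), ρ t = 1)
    (f : X) (hf : ∃ (a0 : E0) (a1 : E1), i0 a0 + i1 a1 = f) :
    ENNReal.ofReal ‖T f‖ ≤ ENNReal.ofReal C1 *
      (∫⁻ t in Set.Ioo (0 : ℝ) (C1 / C0),
        ENNReal.ofReal ((Kpair i0 i1 t f / t) ^ p * ρ t)) ^ (1 / p) := by
  -- first, C1 > 0
  have hC1pos : 0 < C1 := by
    rcases lt_or_eq_of_le hC1 with h | h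
    · exact h
    · exfalso
      have hz : ρ = 0 := by
        funext t
        by_contra ht
        have := hρsupp ht
        rw [← h] at this
        simp at this
      rw [hz] at hρint
      simp at hρint
  have hρintg : IntegrableOn ρ (Set.Ioi (0:ℝ)) := by
    by_contra h
    rw [integral_undef h] at hρint
    norm_num at hρint
  -- the key pointwise bound
  set c : ℝ := ‖T f‖ / C1 with hc
  have hcnn : 0 ≤ c := div_nonneg (norm_nonneg _) hC1
  have key : ∀ t ∈ Set.Ioo (0:ℝ) (C1/C0), c ≤ Kpair i0 i1 t f / t := by
    intro t ht
    rw [le_div_iff₀ ht.1]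
    have hK : c * t ≤ Kpair i0 i1 t f := by
      apply le_csInf
      · obtain ⟨a0, a1, h⟩ := hf
        exact ⟨‖a0‖ + t * ‖a1‖, a0, a1, h, rfl⟩
      · rintro r ⟨a0, a1, hsum, rfl⟩
        have hTf : ‖T f‖ ≤ C0 * ‖a0‖ + C1 * ‖a1‖ := by
          calc ‖T f‖ = ‖T (i0 a0) + T (i1 a1)‖ := by rw [← map_add, hsum]
            _ ≤ ‖T (i0 a0)‖ + ‖T (i1 a1)‖ := norm_add_le _ _
            _ ≤ C0 * ‖a0‖ + C1 * ‖a1‖ := add_le_add (hT0 a0) (hT1 a1)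
        -- t < C1/C0 so C0 * t < C1, so C0 ≤ C1/t
        have ht2 : C0 * t ≤ C1 := by
          have := ht.2.le
          rw [le_div_iff₀ hC0] at this
          linarith
        -- c * t = ‖Tf‖ * t / C1 ≤ ‖a0‖ + t ‖a1‖
        rw [hc, div_mul_eq_mul_div, div_le_iff₀ hC1pos]
        calc ‖T f‖ * t ≤ (C0 * ‖a0‖ + C1 * ‖a1‖) * t := by
              apply mul_le_mul_of_nonneg_right hTf ht.1.le
          _ = (C0 * t) * ‖a0‖ + C1 * (t * ‖a1‖) := by ring
          _ ≤ C1 * ‖a0‖ + C1 * (t * ‖a1‖) := by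
              have : (C0 * t) * ‖a0‖ ≤ C1 * ‖a0‖ :=
                mul_le_mul_of_nonneg_right ht2 (norm_nonneg _)
              linarith
          _ = (‖a0‖ + t * ‖a1‖) * C1 := by ring
    linarith
  -- lower bound on the integral
  have hmono : ∫⁻ t in Set.Ioo (0:ℝ) (C1/C0), ENNReal.ofReal (c ^ p * ρ t)
      ≤ ∫⁻ t in Set.Ioo (0:ℝ) (C1/C0),
        ENNReal.ofReal ((Kpair i0 i1 t f / t) ^ p * ρ t) := by
    apply lintegral_mono
    intro t
    by_cases ht : t ∈ Set.Ioo (0:ℝ) (C1/C0)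
    · apply ENNReal.ofReal_le_ofReal
      apply mul_le_mul_of_nonneg_right _ (hρnn t)
      exact Real.rpow_le_rpow hcnn (key t ht) hp.le
    · have : ρ t = 0 := by
        by_contra h
        exact ht (hρsupp h)
      simp [this]
  have hconst : ∫⁻ t in Set.Ioo (0:ℝ) (C1/C0), ENNReal.ofReal (c ^ p * ρ t)
      = ENNReal.ofReal (c ^ p) := by
    have h1 : ∀ t, ENNReal.ofReal (c ^ p * ρ t)
        = ENNReal.ofReal (c ^ p) * ENNReal.ofReal (ρ t) := fun t =>
      ENNReal.ofReal_mul (Real.rpow_nonneg hcnn p)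
    simp_rw [h1]
    rw [lintegral_const_mul' _ _ ENNReal.ofReal_ne_top]
    have h2 : ∫⁻ t in Set.Ioo (0:ℝ) (C1/C0), ENNReal.ofReal (ρ t)
        = ∫⁻ t in Set.Ioi (0:ℝ), ENNReal.ofReal (ρ t) := by
      rw [← lintegral_indicator measurableSet_Ioo,
        ← lintegral_indicator measurableSet_Ioi]
      apply lintegral_congr
      intro t
      by_cases ht : ρ t = 0
      · simp [Set.indicator_apply, ht]
      · have hmem := hρsupp ht
        rw [Set.indicator_of_mem hmem, Set.indicator_of_mem (Set.Ioo_subset_Ioi_self hmem)]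
    rw [h2, ← ofReal_integral_eq_lintegral_ofReal hρintg
      (Filter.Eventually.of_forall fun t => hρnn t), hρint]
    simp
  -- combine
  calc ENNReal.ofReal ‖T f‖ = ENNReal.ofReal C1 * ENNReal.ofReal c := by
        rw [← ENNReal.ofReal_mul hC1, hc, mul_div_cancel₀ _ (ne_of_gt hC1pos)]
    _ ≤ ENNReal.ofReal C1 *
        (∫⁻ t in Set.Ioo (0:ℝ) (C1/C0),
          ENNReal.ofReal ((Kpair i0 i1 t f / t) ^ p * ρ t)) ^ (1 / p) := by
        apply mul_le_mul_right
        have : ENNReal.ofReal c = (ENNReal.ofReal (c ^ p)) ^ (1/p) := by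
          rw [ENNReal.ofReal_rpow_of_nonneg (Real.rpow_nonneg hcnn p) (by positivity),
            one_div, Real.rpow_rpow_inv hcnn (ne_of_gt hp)]
        rw [this]
        exact ENNReal.rpow_le_rpow (hconst ▸ hmono) (by positivity)
end

section
/- Let $p \in (0,\infty)$ and let $\{\rho_\varepsilon\}_{\varepsilon>0}$ be non-negative measurable functions on $(0,\infty)$ with $\lim_{\varepsilon\to 0^+}\int_0^a \rho_\varepsilon(t)\,dt = 1$ for every $a \in (0,1)$. Let $g:(0,\infty)\to[0,\infty)$ satisfy $\lim_{t\to 0^+} g(t)/t = \infty$. Then $\lim_{\varepsilon\to 0^+}\int_0^\infty (g(t)/t)^p \rho_\varepsilon(t)\,dt = \infty$. -/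
open MeasureTheory Filter Topology

/-- Lemma 2.2(i) of the paper (infinite-limit case). -/
theorem stmt6 (p : ℝ) (hp : 0 < p) (ρ : ℝ → ℝ → ℝ)
    (hρnn : ∀ ε > (0 : ℝ), ∀ t, 0 ≤ ρ ε t)
    (hρlim : ∀ a ∈ Set.Ioo (0 : ℝ) 1,
      Tendsto (fun ε => ∫ t in Set.Ioo (0 : ℝ) a, ρ ε t) (𝓝[>] (0 : ℝ)) (𝓝 1))
    (g : ℝ → ℝ) (hgnn : ∀ t > (0 : ℝ), 0 ≤ g t)
    (hL : Tendsto (fun t => g t / t) (𝓝[>] (0 : ℝ)) atTop) :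
    Tendsto (fun ε => ∫⁻ t in Set.Ioi (0 : ℝ), ENNReal.ofReal ((g t / t) ^ p * ρ ε t))
      (𝓝[>] (0 : ℝ)) (𝓝 ⊤) := by
  rw [ENNReal.tendsto_nhds_top_iff_nat]
  intro n
  set M : ℝ := 2 * n + 2 with hMdef
  have hM0 : (0 : ℝ) ≤ M := by positivity
  set C : ℝ := max 1 (M ^ p⁻¹) with hCdef
  have hC0 : (0 : ℝ) ≤ C := le_trans zero_le_one (le_max_left _ _)
  have hCp : M ≤ C ^ p := by
    calc M = (M ^ p⁻¹) ^ p := (Real.rpow_inv_rpow hM0 hp.ne').symm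
      _ ≤ C ^ p := Real.rpow_le_rpow (Real.rpow_nonneg hM0 _) (le_max_right _ _) hp.le
  have hev : {t : ℝ | C ≤ g t / t} ∈ 𝓝[>] (0 : ℝ) := hL.eventually_ge_atTop C
  obtain ⟨u, hu, hsub⟩ := mem_nhdsGT_iff_exists_Ioo_subset.mp hev
  set a : ℝ := min (u / 2) (1 / 2) with hadef
  have hu0 : (0 : ℝ) < u := hu
  have ha : a ∈ Set.Ioo (0 : ℝ) 1 := by
    constructor
    · exact lt_min (by linarith) (by norm_num)
    · exact lt_of_le_of_lt (min_le_right _ _) (by norm_num)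
  have hasub : Set.Ioo (0 : ℝ) a ⊆ {t : ℝ | C ≤ g t / t} := by
    intro t ht
    exact hsub ⟨ht.1, lt_of_lt_of_le ht.2 ((min_le_left _ _).trans (by linarith))⟩
  have hev2 : ∀ᶠ ε in 𝓝[>] (0 : ℝ), (1 : ℝ) / 2 < ∫ t in Set.Ioo (0 : ℝ) a, ρ ε t :=
    (hρlim a ha).eventually (eventually_gt_nhds (by norm_num))
  filter_upwards [hev2, eventually_mem_nhdsWithin] with ε hε hε0
  have hε0' : (0 : ℝ) < ε := hε0
  have h1 : ENNReal.ofReal (∫ t in Set.Ioo (0 : ℝ) a, ρ ε t)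
      ≤ ∫⁻ t in Set.Ioo (0 : ℝ) a, ENNReal.ofReal (ρ ε t) := by
    calc ENNReal.ofReal (∫ t in Set.Ioo (0 : ℝ) a, ρ ε t)
        ≤ (‖∫ t in Set.Ioo (0 : ℝ) a, ρ ε t‖₊ : ENNReal) := Real.ofReal_le_enorm _
      _ ≤ ∫⁻ t in Set.Ioo (0 : ℝ) a, (‖ρ ε t‖₊ : ENNReal) :=
          enorm_integral_le_lintegral_enorm _
      _ = ∫⁻ t in Set.Ioo (0 : ℝ) a, ENNReal.ofReal (ρ ε t) :=
          lintegral_congr fun t => Real.enorm_eq_ofReal (hρnn ε hε0' t)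
  have h3 : ∫⁻ t in Set.Ioo (0 : ℝ) a, ENNReal.ofReal (M * ρ ε t)
      = ENNReal.ofReal M * ∫⁻ t in Set.Ioo (0 : ℝ) a, ENNReal.ofReal (ρ ε t) := by
    simp_rw [ENNReal.ofReal_mul hM0]
    exact lintegral_const_mul' _ _ ENNReal.ofReal_ne_top
  have h2 : ∫⁻ t in Set.Ioo (0 : ℝ) a, ENNReal.ofReal (M * ρ ε t)
      ≤ ∫⁻ t in Set.Ioi (0 : ℝ), ENNReal.ofReal ((g t / t) ^ p * ρ ε t) := by
    refine le_trans ?_ (lintegral_mono_set (Set.Ioo_subset_Ioi_self : Set.Ioo (0 : ℝ) a ⊆ Set.Ioi 0))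
    refine lintegral_mono_ae ((ae_restrict_iff' measurableSet_Ioo).2 (ae_of_all _ fun t ht => ?_))
    apply ENNReal.ofReal_le_ofReal
    apply mul_le_mul_of_nonneg_right _ (hρnn ε hε0' t)
    exact hCp.trans (Real.rpow_le_rpow hC0 (hasub ht) hp.le)
  calc (n : ENNReal) = ENNReal.ofReal n := by simp
    _ < ENNReal.ofReal (M * (1 / 2)) := by
        rw [ENNReal.ofReal_lt_ofReal_iff (by positivity)]
        rw [hMdef]; linarith
    _ ≤ ENNReal.ofReal M * ENNReal.ofReal (∫ t in Set.Ioo (0 : ℝ) a, ρ ε t) := by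
        rw [ENNReal.ofReal_mul hM0]
        exact mul_le_mul_right (ENNReal.ofReal_le_ofReal hε.le) _
    _ ≤ ENNReal.ofReal M * ∫⁻ t in Set.Ioo (0 : ℝ) a, ENNReal.ofReal (ρ ε t) :=
        mul_le_mul_right h1 _
    _ = ∫⁻ t in Set.Ioo (0 : ℝ) a, ENNReal.ofReal (M * ρ ε t) := h3.symm
    _ ≤ _ := h2
end
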